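/- Let C_1, …, C_n be d×d complex matrices satisfying the CAR relations C_iC_j + C_jC_i = 0 and C_i*C_j + C_jC_i* = δ_{ij}·I. Then ‖Σ_{k=1}^n C_k ⊗ C̄_k‖ ≥ n/2, where C̄_k denotes the entrywise complex conjugate matrix. -/

import Mathlib

open Kronecker

/-- If `C₁, …, Cₙ` are `d × d` matrices satisfying the CAR relations, then
`‖Σ_k C_k ⊗ C̄_k‖ ≥ n / 2`, the norm being the operator norm on `ℂ^d ⊗ ℂ^d ≅ ℂ^{d²}`. -/
theorem car_tensor_conj_lower_bound
    (n d : ℕ) (hd : 0 < d) (C : Fin n → Matrix (Fin d) (Fin d) ℂ)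
    (hCAR₁ : ∀ i j, C i * C j + C j * C i = 0)
    (hCAR₂ : ∀ i j, star (C i) * C j + C j * star (C i) =
      if i = j then (1 : Matrix (Fin d) (Fin d) ℂ) else 0) :
    (n : ℝ) / 2 ≤
      ‖Matrix.toEuclideanCLM (𝕜 := ℂ)
        (∑ k, (C k) ⊗ₖ ((C k).map (starRingEnd ℂ)))‖ := by
  classical
  set M : Matrix (Fin d × Fin d) (Fin d × Fin d) ℂ :=
    ∑ k, (C k) ⊗ₖ ((C k).map (starRingEnd ℂ)) with hM
  set T := Matrix.toEuclideanCLM (𝕜 := ℂ) M with hT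
  have htr : ∀ k, (C k * star (C k)).trace = (d : ℂ) / 2 := by
    intro k
    have h := congrArg Matrix.trace (hCAR₂ k k)
    simp only [eq_self_iff_true, if_true, Matrix.trace_add, Matrix.trace_one, Fintype.card_fin] at h
    rw [Matrix.trace_mul_comm] at h
    linear_combination h / 2
  set w₀ : (Fin d × Fin d) → ℂ := fun p => if p.1 = p.2 then 1 else 0 with hw₀
  set w : EuclideanSpace ℂ (Fin d × Fin d) := (WithLp.equiv 2 _).symm w₀ with hw
  have hwinner : (inner ℂ w w : ℂ) = (d : ℂ) := by
    rw [hw]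
    simp [-inner_self_eq_norm_sq_to_K, PiLp.inner_apply, RCLike.inner_apply, WithLp.equiv_symm_apply, PiLp.toLp_apply, hw₀,
      apply_ite (starRingEnd ℂ), Fintype.sum_prod_type, Finset.sum_ite_eq]
  have hwnorm : ‖w‖ ^ 2 = (d : ℝ) := by
    have := inner_self_eq_norm_sq (𝕜 := ℂ) w
    rw [hwinner] at this
    simpa using this.symm
  have hTw : T w = (WithLp.equiv 2 _).symm (M.mulVec w₀) := by
    rw [hw, hT, WithLp.equiv_symm_apply, Matrix.toEuclideanCLM_toLp]
  have hinner : (inner ℂ w (T w) : ℂ) = ∑ k, (C k * star (C k)).trace := by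
    rw [hTw, hw]
    simp only [PiLp.inner_apply, RCLike.inner_apply, WithLp.equiv_symm_apply, PiLp.toLp_apply, hw₀,
      Matrix.mulVec, dotProduct, hM, Matrix.sum_apply, Matrix.kroneckerMap_apply,
      Matrix.map_apply, mul_ite, ite_mul, mul_zero, zero_mul, mul_one, one_mul,
      apply_ite (starRingEnd ℂ), map_one, map_zero]
    rw [Fintype.sum_prod_type]
    simp only [Finset.sum_ite_eq, Finset.mem_univ, if_true]
    have htr2 : ∀ k, (C k * star (C k)).trace
        = ∑ x : Fin d, ∑ a : Fin d, C k x a * (starRingEnd ℂ) (C k x a) := by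
      intro k
      simp [Matrix.trace, Matrix.mul_apply, Matrix.star_apply,
        Matrix.conjTranspose_apply, Matrix.diag]
    simp only [htr2, Fintype.sum_prod_type, Finset.sum_ite_eq, Finset.mem_univ, if_true]
    conv_rhs => rw [Finset.sum_comm]
    exact Finset.sum_congr rfl fun x _ => Finset.sum_comm
  have hinner2 : (inner ℂ w (T w) : ℂ) = (n : ℂ) * d / 2 := by
    rw [hinner]
    simp [htr]
    ring
  have hre : ((n : ℝ) * d) / 2 = Complex.re (inner ℂ w (T w)) := by
    rw [hinner2]
    push_cast
    simp
  have hd' : (0:ℝ) < d := by exact_mod_cast hd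
  have hb : (n : ℝ) * d / 2 ≤ ‖T‖ * d :=
    calc (n:ℝ) * d / 2 = Complex.re (inner ℂ w (T w)) := hre
      _ ≤ ‖(inner ℂ w (T w) : ℂ)‖ := Complex.re_le_norm _
      _ ≤ ‖w‖ * ‖T w‖ := norm_inner_le_norm _ _
      _ ≤ ‖w‖ * (‖T‖ * ‖w‖) :=
          mul_le_mul_of_nonneg_left (T.le_opNorm w) (norm_nonneg _)
      _ = ‖T‖ * ‖w‖ ^ 2 := by ring
      _ = ‖T‖ * d := by rw [hwnorm]
  nlinarith [hb, hd']
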